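/- (Opial Lemma) Let (x^k) be a bounded sequence in ℝ^n and let X ⊆ ℝ^n. Suppose that: (1) for every z ∈ X, the limit lim_{k→∞} ‖x^k − z‖ exists; and (2) every sequential cluster point of (x^k) belongs to X. Then (x^k) converges to a point of X. -/

import Mathlib

open Filter

/-- Auxiliary: two cluster points are equal given the limit condition. -/
theorem opial_aux (n : ℕ) (x : ℕ → EuclideanSpace ℝ (Fin n)) {p q : EuclideanSpace ℝ (Fin n)}
    {Lp Lq : ℝ}
    (hp : Tendsto (fun k => ‖x k - p‖) atTop (nhds Lp))
    (hq : Tendsto (fun k => ‖x k - q‖) atTop (nhds Lq))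
    (φ ψ : ℕ → ℕ) (hφ : StrictMono φ) (hψ : StrictMono ψ)
    (hxp : Tendsto (fun m => x (φ m)) atTop (nhds p))
    (hxq : Tendsto (fun m => x (ψ m)) atTop (nhds q)) : p = q := by
  -- the inner products ⟪x k, q - p⟫ converge
  have key : Tendsto (fun k => (2 : ℝ) * inner ℝ (x k) (q - p) + ‖p‖ ^ 2 - ‖q‖ ^ 2)
      atTop (nhds (Lp ^ 2 - Lq ^ 2)) := by
    have : ∀ k, (2 : ℝ) * inner ℝ (x k) (q - p) + ‖p‖ ^ 2 - ‖q‖ ^ 2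
        = ‖x k - p‖ ^ 2 - ‖x k - q‖ ^ 2 := by
      intro k
      have h1 : ‖x k - p‖ ^ 2 = ‖x k‖ ^ 2 - 2 * inner ℝ (x k) p + ‖p‖ ^ 2 := by
        rw [← real_inner_self_eq_norm_sq, ← real_inner_self_eq_norm_sq,
          ← real_inner_self_eq_norm_sq]
        simp [inner_sub_sub_self, real_inner_comm p (x k)]
        rw [norm_sub_sq_real, real_inner_comm p (x k)]
      have h2 : ‖x k - q‖ ^ 2 = ‖x k‖ ^ 2 - 2 * inner ℝ (x k) q + ‖q‖ ^ 2 := by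
        rw [← real_inner_self_eq_norm_sq, ← real_inner_self_eq_norm_sq,
          ← real_inner_self_eq_norm_sq]
        simp [inner_sub_sub_self, real_inner_comm q (x k)]
        rw [norm_sub_sq_real, real_inner_comm q (x k)]
      rw [h1, h2, inner_sub_right]
      ring
    simp only [this]
    exact ((hp.pow 2).sub (hq.pow 2))
  set c : ℝ := Lp ^ 2 - Lq ^ 2 with hc
  have keyp : Tendsto (fun m => (2 : ℝ) * inner ℝ (x (φ m)) (q - p) + ‖p‖ ^ 2 - ‖q‖ ^ 2)
      atTop (nhds c) := key.comp hφ.tendsto_atTop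
  have keyq : Tendsto (fun m => (2 : ℝ) * inner ℝ (x (ψ m)) (q - p) + ‖p‖ ^ 2 - ‖q‖ ^ 2)
      atTop (nhds c) := key.comp hψ.tendsto_atTop
  have hip : Tendsto (fun m => (2 : ℝ) * inner ℝ (x (φ m)) (q - p) + ‖p‖ ^ 2 - ‖q‖ ^ 2)
      atTop (nhds ((2 : ℝ) * inner ℝ p (q - p) + ‖p‖ ^ 2 - ‖q‖ ^ 2)) := by
    have : Tendsto (fun m => (inner ℝ (x (φ m)) (q - p) : ℝ)) atTop (nhds (inner ℝ p (q - p))) :=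
      (Continuous.inner continuous_id continuous_const).continuousAt.tendsto.comp hxp
    exact ((this.const_mul 2).add tendsto_const_nhds).sub tendsto_const_nhds
  have hiq : Tendsto (fun m => (2 : ℝ) * inner ℝ (x (ψ m)) (q - p) + ‖p‖ ^ 2 - ‖q‖ ^ 2)
      atTop (nhds ((2 : ℝ) * inner ℝ q (q - p) + ‖p‖ ^ 2 - ‖q‖ ^ 2)) := by
    have : Tendsto (fun m => (inner ℝ (x (ψ m)) (q - p) : ℝ)) atTop (nhds (inner ℝ q (q - p))) :=
      (Continuous.inner continuous_id continuous_const).continuousAt.tendsto.comp hxq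
    exact ((this.const_mul 2).add tendsto_const_nhds).sub tendsto_const_nhds
  have e1 : (2 : ℝ) * inner ℝ p (q - p) + ‖p‖ ^ 2 - ‖q‖ ^ 2 = c := tendsto_nhds_unique hip keyp
  have e2 : (2 : ℝ) * inner ℝ q (q - p) + ‖p‖ ^ 2 - ‖q‖ ^ 2 = c := tendsto_nhds_unique hiq keyq
  have : (inner ℝ (q - p) (q - p) : ℝ) = 0 := by
    have := e2.trans e1.symm
    rw [inner_sub_left]
    linarith
  have : q - p = 0 := inner_self_eq_zero.mp this
  have : q = p := by rwa [sub_eq_zero] at this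
  exact this.symm

/-- Opial's Lemma. -/
theorem stmt_17 (n : ℕ) (X : Set (EuclideanSpace ℝ (Fin n)))
    (x : ℕ → EuclideanSpace ℝ (Fin n))
    (hbdd : ∃ M, ∀ k, ‖x k‖ ≤ M)
    (hlim : ∀ z ∈ X, ∃ L, Tendsto (fun k => ‖x k - z‖) atTop (nhds L))
    (hcluster : ∀ p, (∃ φ : ℕ → ℕ, StrictMono φ ∧
      Tendsto (fun m => x (φ m)) atTop (nhds p)) → p ∈ X) :
    ∃ p ∈ X, Tendsto x atTop (nhds p) := by
  obtain ⟨M, hM⟩ := hbdd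
  have hball : ∀ k, x k ∈ Metric.closedBall (0 : EuclideanSpace ℝ (Fin n)) M := by
    intro k; simpa [Metric.mem_closedBall, dist_eq_norm] using hM k
  obtain ⟨p, -, φ, hφ, hxp⟩ :=
    tendsto_subseq_of_bounded Metric.isBounded_closedBall hball
  have hpX : p ∈ X := hcluster p ⟨φ, hφ, hxp⟩
  refine ⟨p, hpX, ?_⟩
  obtain ⟨Lp, hLp⟩ := hlim p hpX
  refine tendsto_of_subseq_tendsto fun ns hns => ?_
  -- the subsequence x ∘ ns is bounded, extract a convergent sub-subsequence
  have hball' : ∀ k, x (ns k) ∈ Metric.closedBall (0 : EuclideanSpace ℝ (Fin n)) M :=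
    fun k => hball (ns k)
  obtain ⟨q, -, ms, hms, hxq⟩ :=
    tendsto_subseq_of_bounded Metric.isBounded_closedBall hball'
  -- q is a cluster point of x
  have hmcp : MapClusterPt q atTop x := by
    have h1 : Tendsto (fun m => ns (ms m)) atTop atTop := hns.comp hms.tendsto_atTop
    exact MapClusterPt.of_comp h1 hxq.mapClusterPt
  obtain ⟨ψ, hψ, hxq'⟩ := TopologicalSpace.FirstCountableTopology.tendsto_subseq hmcp
  have hqX : q ∈ X := hcluster q ⟨ψ, hψ, hxq'⟩
  obtain ⟨Lq, hLq⟩ := hlim q hqX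
  have hpq : p = q := opial_aux n x hLp hLq φ ψ hφ hψ hxp hxq'
  exact ⟨ms, hpq ▸ hxq⟩
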